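/- For every positive integer n, the set SDD_n of scaled diagonally dominant symmetric n×n matrices is a convex cone: it contains 0, is closed under addition, and is closed under multiplication by nonnegative real scalars. -/

import Mathlib

open Matrix Finset

noncomputable section

/-- `e i` is the standard basis vector with a `1` in coordinate `i`. -/
def e {n : ℕ} (i : Fin n) : Fin n → ℝ := Pi.single i 1

/-- The positive semidefinite cone `S^n_+`. -/
def PSDcone (n : ℕ) : Set (Matrix (Fin n) (Fin n) ℝ) :=
  {X | X.IsSymm ∧ ∀ d : Fin n → ℝ, 0 ≤ d ⬝ᵥ X.mulVec d}

/-- The set of diagonally dominant symmetric matrices `DD_n`. -/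
def DD (n : ℕ) : Set (Matrix (Fin n) (Fin n) ℝ) :=
  {A | A.IsSymm ∧ ∀ i, ∑ j ∈ Finset.univ.erase i, |A i j| ≤ A i i}

/-- The set of scaled diagonally dominant symmetric matrices `SDD_n`. -/
def SDD (n : ℕ) : Set (Matrix (Fin n) (Fin n) ℝ) :=
  {A | A.IsSymm ∧ ∃ D : Fin n → ℝ, (∀ i, 0 < D i) ∧
    Matrix.diagonal D * A * Matrix.diagonal D ∈ DD n}

/-- The conical hull of a set of matrices. -/
def coneHull {n : ℕ} (K : Set (Matrix (Fin n) (Fin n) ℝ)) :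
    Set (Matrix (Fin n) (Fin n) ℝ) :=
  {X | ∃ (k : ℕ) (c : Fin k → ℝ) (M : Fin k → Matrix (Fin n) (Fin n) ℝ),
    (∀ i, 0 ≤ c i) ∧ (∀ i, M i ∈ K) ∧ X = ∑ i, c i • M i}

/-- The dual cone within `S^n` w.r.t. the trace inner product. -/
def dualCone {n : ℕ} (K : Set (Matrix (Fin n) (Fin n) ℝ)) :
    Set (Matrix (Fin n) (Fin n) ℝ) :=
  {A | A.IsSymm ∧ ∀ B ∈ K, 0 ≤ Matrix.trace (Aᵀ * B)}

/-- The SD basis of Type I, as a set. -/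
def Bplus (n : ℕ) : Set (Matrix (Fin n) (Fin n) ℝ) :=
  {M | ∃ i j : Fin n, i ≤ j ∧ M = vecMulVec (e i + e j) (e i + e j)}

/-- The SD basis of Type II, as a set. -/
def Bminus (n : ℕ) : Set (Matrix (Fin n) (Fin n) ℝ) :=
  {M | ∃ i : Fin n, M = vecMulVec (e i + e i) (e i + e i)} ∪
    {M | ∃ i j : Fin n, i < j ∧ M = vecMulVec (e i - e j) (e i - e j)}

/-- The expanded SD basis matrix `B̄_{i,j}(α) = (e_i + α e_j)(e_i + α e_j)ᵀ`. -/
def Bbar {n : ℕ} (α : ℝ) (i j : Fin n) : Matrix (Fin n) (Fin n) ℝ :=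
  vecMulVec (e i + α • e j) (e i + α • e j)

/-- The expanded SD basis `B̄(α)`, as a set. -/
def BbarSet (n : ℕ) (α : ℝ) : Set (Matrix (Fin n) (Fin n) ℝ) :=
  {M | ∃ i j : Fin n, i ≤ j ∧ M = Bbar α i j}

/-- The space `S^n` of symmetric matrices as a submodule. -/
def symmSubmodule (n : ℕ) : Submodule ℝ (Matrix (Fin n) (Fin n) ℝ) where
  carrier := {A | A.IsSymm}
  add_mem' := fun {A B} hA hB => by
    simp only [Set.mem_setOf_eq, Matrix.IsSymm, Matrix.transpose_add] at *
    rw [hA, hB]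
  zero_mem' := by simp [Matrix.IsSymm]
  smul_mem' := fun c A hA => by
    simp only [Set.mem_setOf_eq, Matrix.IsSymm, Matrix.transpose_smul] at *
    rw [hA]

/-- Index set for pairs `1 ≤ i ≤ j ≤ n`. -/
abbrev SymIdx (n : ℕ) := {p : Fin n × Fin n // p.1 ≤ p.2}


namespace Stmt4Aux

open Filter Topology Set


variable {n : ℕ}

/-- quadratic form of a matrix -/
def qf (C : Matrix (Fin n) (Fin n) ℝ) (x : Fin n → ℝ) : ℝ :=
  ∑ i, ∑ j, x i * C i j * x j

lemma qf_continuous (C : Matrix (Fin n) (Fin n) ℝ) : Continuous (qf C) := by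
  unfold qf
  exact continuous_finset_sum _ fun i _ => continuous_finset_sum _ fun j _ =>
    ((continuous_apply i).mul continuous_const).mul (continuous_apply j)

/-- Key lemma: a symmetric PSD Z-matrix has a positive vector g with C g ≥ 0,
    relative version on a finset. -/
lemma exists_pos_vec (C : Matrix (Fin n) (Fin n) ℝ)
    (hsym : ∀ i j, C i j = C j i) (hZ : ∀ i j, i ≠ j → C i j ≤ 0)
    (hpsd : ∀ x, 0 ≤ qf C x) (s : Finset (Fin n)) :
    ∃ g : Fin n → ℝ, (∀ i ∈ s, 0 < g i) ∧ (∀ i ∉ s, g i = 0) ∧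
      ∀ i ∈ s, 0 ≤ ∑ j, C i j * g j := by
  induction s using Finset.strongInduction with
  | _ s ih =>
  rcases s.eq_empty_or_nonempty with rfl | hs
  · exact ⟨0, by simp, by simp, by simp⟩
  set Δ : Set (Fin n → ℝ) :=
    {x | (∀ i, 0 ≤ x i) ∧ ((∀ i, i ∉ s → x i = 0) ∧ ∑ i ∈ s, x i = 1)} with hΔ
  -- closedness
  have hc1 : IsClosed {x : Fin n → ℝ | ∀ i, 0 ≤ x i} := by
    rw [Set.setOf_forall]
    exact isClosed_iInter fun i => isClosed_le continuous_const (continuous_apply i)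
  have hc2 : IsClosed {x : Fin n → ℝ | ∀ i, i ∉ s → x i = 0} := by
    rw [Set.setOf_forall]
    refine isClosed_iInter fun i => ?_
    by_cases h : i ∈ s
    · simp [h]
    · simp only [h, not_false_iff, true_implies]
      exact isClosed_eq (continuous_apply i) continuous_const
  have hc3 : IsClosed {x : Fin n → ℝ | ∑ i ∈ s, x i = 1} :=
    isClosed_eq (continuous_finset_sum _ fun i _ => continuous_apply i) continuous_const
  have hclosed : IsClosed Δ := by
    rw [hΔ, Set.setOf_and, Set.setOf_and]
    exact hc1.inter (hc2.inter hc3)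
  -- boundedness: Δ ⊆ Icc 0 1
  have hsub : Δ ⊆ Set.Icc (0 : Fin n → ℝ) 1 := by
    rintro x ⟨hx0, hxs, hxsum⟩
    refine ⟨fun i => hx0 i, fun i => ?_⟩
    by_cases h : i ∈ s
    · have : x i ≤ ∑ j ∈ s, x j := Finset.single_le_sum (fun j _ => hx0 j) h
      simpa [hxsum] using this
    · simp [hxs i h]
  have hcomp : IsCompact Δ := (isCompact_Icc).of_isClosed_subset hclosed hsub
  -- nonemptiness
  obtain ⟨i₀, hi₀⟩ := hs
  have hne : Δ.Nonempty := by
    refine ⟨Pi.single i₀ 1, fun i => ?_, fun i hi => ?_, ?_⟩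
    · rcases eq_or_ne i i₀ with rfl | h
      · simp
      · simp [Pi.single_apply, h]
    · have h : i ≠ i₀ := fun h => hi (h ▸ hi₀)
      simp [Pi.single_apply, h]
    · simp [Pi.single_apply, Finset.sum_ite_eq', hi₀]
  obtain ⟨d, hdΔ, hmin⟩ := hcomp.exists_isMinOn hne (qf_continuous C).continuousOn
  obtain ⟨hd0, hdsupp, hdsum⟩ := hdΔ
  set μ := qf C d with hμ
  have hμ0 : 0 ≤ μ := hpsd d
  -- KKT condition
  have hkkt : ∀ i ∈ s, μ ≤ ∑ j, C i j * d j := by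
    intro i his
    set r := ∑ j, C i j * d j with hr
    set δ : Fin n → ℝ := Pi.single i 1 with hδ
    have hδapp : ∀ j, δ j = if j = i then (1:ℝ) else 0 := fun j => Pi.single_apply i 1 j
    have hexp : ∀ t : ℝ,
        qf C ((1 - t) • d + t • δ)
          = (1 - t) ^ 2 * μ + 2 * (t * (1 - t)) * r + t ^ 2 * C i i := by
      intro t
      have e1 : ∀ a b : Fin n,
          ((1 - t) • d + t • δ) a * C a b * ((1 - t) • d + t • δ) b
            = (1 - t) ^ 2 * (d a * C a b * d b)
              + (t * (1 - t)) * (d a * C a b * δ b)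
              + (t * (1 - t)) * (δ a * C a b * d b)
              + t ^ 2 * (δ a * C a b * δ b) := by
        intro a b
        simp only [Pi.add_apply, Pi.smul_apply, smul_eq_mul]
        ring
      have S2 : ∑ a, ∑ b, d a * C a b * δ b = r := by
        have h1 : ∀ a : Fin n, ∑ b, d a * C a b * δ b = d a * C a i := by
          intro a
          simp [hδapp, mul_ite, Finset.sum_ite_eq']
        rw [Finset.sum_congr rfl fun a _ => h1 a, hr]
        exact Finset.sum_congr rfl fun a _ => by rw [hsym a i]; ring
      have S3 : ∑ a, ∑ b, δ a * C a b * d b = r := by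
        have h1 : ∀ a : Fin n, ∑ b, δ a * C a b * d b
            = if a = i then ∑ b, C a b * d b else 0 := by
          intro a
          rcases eq_or_ne a i with rfl | h
          · simp [hδapp]
          · simp [hδapp, h]
        rw [Finset.sum_congr rfl fun a _ => h1 a, Finset.sum_ite_eq', if_pos (Finset.mem_univ i), hr]
      have S4 : ∑ a, ∑ b, δ a * C a b * δ b = C i i := by
        have h1 : ∀ a : Fin n, ∑ b, δ a * C a b * δ b = if a = i then C a i else 0 := by
          intro a
          rcases eq_or_ne a i with rfl | h
          · simp [hδapp, mul_ite, Finset.sum_ite_eq']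
          · simp [hδapp, h]
        rw [Finset.sum_congr rfl fun a _ => h1 a, Finset.sum_ite_eq', if_pos (Finset.mem_univ i)]
      unfold qf
      rw [Finset.sum_congr rfl fun a _ => Finset.sum_congr rfl fun b _ => e1 a b]
      simp only [Finset.sum_add_distrib, ← Finset.mul_sum]
      rw [S2, S3, S4]
      have h5 : ∑ a, ∑ b, d a * C a b * d b = μ := rfl
      rw [h5]; ring
    have h2 : ∀ t : ℝ, t ∈ Set.Ioc (0:ℝ) 1 → (2 - t) * μ ≤ 2 * (1 - t) * r + t * C i i := by
      intro t ht
      have hmemΔ : ((1 - t) • d + t • δ) ∈ Δ := by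
        refine ⟨fun j => ?_, fun j hj => ?_, ?_⟩
        · have ha : 0 ≤ (1 - t) * d j := mul_nonneg (by linarith [ht.2]) (hd0 j)
          have hb : 0 ≤ t * δ j := by
            refine mul_nonneg (le_of_lt ht.1) ?_
            rw [hδapp j]; positivity
          simpa [Pi.add_apply, Pi.smul_apply, smul_eq_mul] using add_nonneg ha hb
        · have h : j ≠ i := fun h => hj (h ▸ his)
          simp [Pi.add_apply, Pi.smul_apply, smul_eq_mul, hdsupp j hj, hδapp j, h]
        · simp only [Pi.add_apply, Pi.smul_apply, smul_eq_mul]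
          rw [Finset.sum_add_distrib, ← Finset.mul_sum, ← Finset.mul_sum, hdsum]
          have : ∑ j ∈ s, δ j = 1 := by
            simp [hδapp, Finset.sum_ite_eq', his]
          rw [this]; ring
      have hq : μ ≤ qf C ((1 - t) • d + t • δ) := hmin hmemΔ
      rw [hexp t] at hq
      have h3 : t * ((2 - t) * μ) ≤ t * (2 * (1 - t) * r + t * C i i) := by nlinarith [hq]
      exact le_of_mul_le_mul_left h3 ht.1
    -- take the limit t → 0⁺
    have hlim1 : Tendsto (fun t : ℝ => (2 - t) * μ) (𝓝[>] (0:ℝ)) (𝓝 (2 * μ)) := by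
      have hc : Continuous (fun t : ℝ => (2 - t) * μ) := by fun_prop
      have := hc.tendsto 0
      simpa using this.mono_left nhdsWithin_le_nhds
    have hlim2 : Tendsto (fun t : ℝ => 2 * (1 - t) * r + t * C i i) (𝓝[>] (0:ℝ))
        (𝓝 (2 * r)) := by
      have hc : Continuous (fun t : ℝ => 2 * (1 - t) * r + t * C i i) := by fun_prop
      have := hc.tendsto 0
      simpa using this.mono_left nhdsWithin_le_nhds
    have hev : ∀ᶠ t in 𝓝[>] (0:ℝ), (2 - t) * μ ≤ 2 * (1 - t) * r + t * C i i := by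
      filter_upwards [Ioc_mem_nhdsGT (zero_lt_one)] with t ht using h2 t ht
    have : 2 * μ ≤ 2 * r := le_of_tendsto_of_tendsto hlim1 hlim2 hev
    linarith
  -- split into zero / positive support
  set S := s.filter (fun i => d i = 0) with hS
  by_cases hSe : S = ∅
  · refine ⟨d, fun i hi => ?_, hdsupp, fun i hi => le_trans hμ0 (hkkt i hi)⟩
    rcases lt_or_eq_of_le (hd0 i) with h | h
    · exact h
    · have hmem : i ∈ S := Finset.mem_filter.mpr ⟨hi, h.symm⟩
      rw [hSe] at hmem
      exact absurd hmem (Finset.notMem_empty i)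
  · -- S nonempty: show μ = 0 and cross terms vanish
    have hSsub : S ⊆ s := Finset.filter_subset _ _
    have hpos : ∃ j ∈ s, 0 < d j := by
      by_contra h
      push_neg at h
      have : ∀ j ∈ s, d j = 0 := fun j hj => le_antisymm (h j hj) (hd0 j)
      rw [Finset.sum_congr rfl this] at hdsum
      simpa using hdsum
    obtain ⟨j₀, hj₀s, hj₀pos⟩ := hpos
    have hSne : S ⊂ s := by
      refine Finset.ssubset_iff_of_subset hSsub |>.mpr ⟨j₀, hj₀s, ?_⟩
      simp [hS, Finset.mem_filter, hj₀pos.ne']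
    -- for i ∈ S, each term C i j * d j = 0
    have hzero : ∀ i ∈ S, ∀ j, C i j * d j = 0 := by
      intro i hiS
      obtain ⟨his, hdi⟩ := Finset.mem_filter.mp hiS
      have hterm : ∀ j, C i j * d j ≤ 0 := by
        intro j
        rcases eq_or_ne j i with rfl | h
        · simp [hdi]
        · exact mul_nonpos_of_nonpos_of_nonneg (hZ i j (Ne.symm h)) (hd0 j)
      have hsum_le : ∑ j, C i j * d j ≤ 0 := Finset.sum_nonpos fun j _ => hterm j
      have hsum_ge : 0 ≤ ∑ j, C i j * d j := le_trans hμ0 (hkkt i his)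
      have hsum0 : ∑ j, C i j * d j = 0 := le_antisymm hsum_le hsum_ge
      intro j
      have := (Finset.sum_eq_zero_iff_of_nonpos (fun j _ => hterm j)).mp hsum0
      exact this j (mem_univ j)
    have hμeq : μ = 0 := by
      obtain ⟨i₁, hi₁⟩ := Finset.nonempty_iff_ne_empty.mpr hSe
      obtain ⟨hi₁s, _⟩ := Finset.mem_filter.mp hi₁
      have h1 : ∑ j, C i₁ j * d j = 0 := Finset.sum_eq_zero fun j _ => hzero i₁ hi₁ j
      have := hkkt i₁ hi₁s
      rw [h1] at this
      exact le_antisymm this hμ0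
    -- induction on S
    obtain ⟨h, hh1, hh2, hh3⟩ := ih S hSne
    refine ⟨d + h, ?_, ?_, ?_⟩
    · intro i hi
      by_cases hiS : i ∈ S
      · have : d i = 0 := (Finset.mem_filter.mp hiS).2
        simpa [Pi.add_apply, this] using hh1 i hiS
      · have hdipos : 0 < d i := by
          rcases lt_or_eq_of_le (hd0 i) with hlt | heq
          · exact hlt
          · exact absurd (Finset.mem_filter.mpr ⟨hi, heq.symm⟩) hiS
        simpa [Pi.add_apply, hh2 i hiS] using hdipos
    · intro i hi
      have h1 : d i = 0 := hdsupp i hi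
      have h2' : h i = 0 := hh2 i (fun hiS => hi (hSsub hiS))
      simp [Pi.add_apply, h1, h2']
    · intro i hi
      have hsplit : ∑ j, C i j * (d + h) j = (∑ j, C i j * d j) + ∑ j, C i j * h j := by
        rw [← Finset.sum_add_distrib]
        exact Finset.sum_congr rfl fun j _ => by simp [Pi.add_apply]; ring
      rw [hsplit]
      by_cases hiS : i ∈ S
      · have ha : ∑ j, C i j * d j = 0 := Finset.sum_eq_zero fun j _ => hzero i hiS j
        rw [ha, zero_add]
        exact hh3 i hiS
      · have ha : 0 ≤ ∑ j, C i j * d j := le_trans hμ0 (hkkt i hi)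
        have hb : ∑ j, C i j * h j = 0 := by
          refine Finset.sum_eq_zero fun j _ => ?_
          by_cases hjS : j ∈ S
          · -- C i j = 0 : cross term, since d i > 0
            have hdipos : 0 < d i := by
              rcases lt_or_eq_of_le (hd0 i) with hlt | heq
              · exact hlt
              · exact absurd (Finset.mem_filter.mpr ⟨hi, heq.symm⟩) hiS
            have := hzero j hjS i
            have hCji : C j i = 0 := by
              rcases mul_eq_zero.mp this with h' | h'
              · exact h'
              · exact absurd h' hdipos.ne'
            rw [hsym i j, hCji, zero_mul]
          · rw [hh2 j hjS, mul_zero]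
        rw [hb, add_zero]
        exact ha
/-- quadratic form of a (absolutely symmetric) diagonally dominant matrix is nonneg -/
lemma qf_nonneg_of_dd (M : Matrix (Fin n) (Fin n) ℝ)
    (habs : ∀ i j, |M i j| = |M j i|)
    (hdd : ∀ i, ∑ j ∈ Finset.univ.erase i, |M i j| ≤ M i i) (x : Fin n → ℝ) :
    0 ≤ qf M x := by
  set y : Fin n → ℝ := fun i => |x i| with hy
  have key1 : ∀ i : Fin n,
      M i i * y i ^ 2 - ∑ j ∈ Finset.univ.erase i, |M i j| * (y i * y j)
        ≤ ∑ j, x i * M i j * x j := by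
    intro i
    rw [← Finset.add_sum_erase (univ) (fun j => x i * M i j * x j) (Finset.mem_univ i)]
    have h1 : x i * M i i * x i = M i i * y i ^ 2 := by
      simp only [hy]; rw [sq_abs]; ring
    have h2 : ∀ j ∈ Finset.univ.erase i,
        -(|M i j| * (y i * y j)) ≤ x i * M i j * x j := by
      intro j _
      have hxy : x i * (M i j * x j) ≥ -(|x i| * (|M i j| * |x j|)) := by
        rw [← abs_mul, ← abs_mul]
        exact neg_abs_le _
      simp only [hy]; nlinarith [hxy]
    have h3 : ∑ j ∈ Finset.univ.erase i, -(|M i j| * (y i * y j))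
        ≤ ∑ j ∈ Finset.univ.erase i, x i * M i j * x j :=
      Finset.sum_le_sum h2
    rw [Finset.sum_neg_distrib] at h3
    linarith [h1, h3]
  have key2 : ∑ i, (M i i * y i ^ 2 - ∑ j ∈ Finset.univ.erase i, |M i j| * (y i * y j))
      ≤ qf M x := by
    unfold qf
    exact Finset.sum_le_sum fun i _ => key1 i
  -- now lower bound the left side by 0
  have step2 : ∀ i, ∑ j ∈ Finset.univ.erase i, |M i j| * (y i * y j)
      ≤ ∑ j ∈ Finset.univ.erase i, |M i j| * ((y i ^ 2 + y j ^ 2) / 2) := by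
    intro i
    refine Finset.sum_le_sum fun j _ => ?_
    have hy0 : 0 ≤ y i := abs_nonneg _
    have hy0' : 0 ≤ y j := abs_nonneg _
    have : y i * y j ≤ (y i ^ 2 + y j ^ 2) / 2 := by nlinarith [sq_nonneg (y i - y j)]
    exact mul_le_mul_of_nonneg_left this (abs_nonneg _)
  have step3 : ∑ i, ∑ j ∈ Finset.univ.erase i, |M i j| * ((y i ^ 2 + y j ^ 2) / 2)
      = ∑ i, ∑ j ∈ Finset.univ.erase i, |M i j| * y i ^ 2 := by
    have hsplit : ∀ i j : Fin n, |M i j| * ((y i ^ 2 + y j ^ 2) / 2)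
        = |M i j| * y i ^ 2 / 2 + |M i j| * y j ^ 2 / 2 := fun i j => by ring
    simp_rw [hsplit, Finset.sum_add_distrib]
    have hswap : ∑ i, ∑ j ∈ Finset.univ.erase i, |M i j| * y j ^ 2 / 2
        = ∑ i, ∑ j ∈ Finset.univ.erase i, |M i j| * y i ^ 2 / 2 := by
      rw [Finset.sum_comm' (s' := fun j => Finset.univ.erase j) (t' := Finset.univ)
        (by intro x y; simp [Finset.mem_erase, eq_comm, ne_comm, And.comm])]
      refine Finset.sum_congr rfl fun j _ => Finset.sum_congr rfl fun i hi => ?_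
      rw [habs j i]
    rw [hswap]
    rw [← Finset.sum_add_distrib]
    refine Finset.sum_congr rfl fun i _ => ?_
    rw [← Finset.sum_add_distrib]
    refine Finset.sum_congr rfl fun j _ => by ring
  have step4 : ∑ i, ∑ j ∈ Finset.univ.erase i, |M i j| * y i ^ 2
      ≤ ∑ i, M i i * y i ^ 2 := by
    refine Finset.sum_le_sum fun i _ => ?_
    rw [← Finset.sum_mul]
    exact mul_le_mul_of_nonneg_right (hdd i) (sq_nonneg _)
  have : (0:ℝ) ≤ ∑ i, (M i i * y i ^ 2 - ∑ j ∈ Finset.univ.erase i, |M i j| * (y i * y j)) := by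
    rw [Finset.sum_sub_distrib]
    have := le_trans (Finset.sum_le_sum fun i _ => step2 i) (le_of_eq step3)
    linarith [le_trans this step4]
  linarith [key2, this]

lemma qf_scale (M : Matrix (Fin n) (Fin n) ℝ) (d : Fin n → ℝ) (u : Fin n → ℝ) :
    qf (Matrix.of fun i j => d i * M i j * d j) u = qf M (fun i => d i * u i) := by
  unfold qf
  refine Finset.sum_congr rfl fun i _ => Finset.sum_congr rfl fun j _ => ?_
  simp only [Matrix.of_apply]
  ring


lemma tri_apply (D : Fin n → ℝ) (A : Matrix (Fin n) (Fin n) ℝ) (i j : Fin n) :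
    (Matrix.diagonal D * A * Matrix.diagonal D) i j = D i * A i j * D j := by
  rw [Matrix.mul_diagonal, Matrix.diagonal_mul]

lemma tri_isSymm (D : Fin n → ℝ) {A : Matrix (Fin n) (Fin n) ℝ} (hA : A.IsSymm) :
    (Matrix.diagonal D * A * Matrix.diagonal D).IsSymm := by
  unfold Matrix.IsSymm at *
  rw [Matrix.transpose_mul, Matrix.transpose_mul, Matrix.diagonal_transpose, hA,
    Matrix.mul_assoc]

lemma row_bound {A : Matrix (Fin n) (Fin n) ℝ} {D : Fin n → ℝ} (hD : ∀ i, 0 < D i)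
    (hDD : Matrix.diagonal D * A * Matrix.diagonal D ∈ DD n) :
    ∀ i, ∑ j ∈ Finset.univ.erase i, |A i j| * D j ≤ A i i * D i := by
  intro i
  have h := hDD.2 i
  have e1 : ∀ j, |(Matrix.diagonal D * A * Matrix.diagonal D) i j|
      = D i * (|A i j| * D j) := by
    intro j
    rw [tri_apply, abs_mul, abs_mul, abs_of_pos (hD i), abs_of_pos (hD j)]
    ring
  rw [Finset.sum_congr rfl fun j _ => e1 j, ← Finset.mul_sum, tri_apply, mul_assoc] at h
  exact le_of_mul_le_mul_left h (hD i)

lemma mem_SDD_of_rows {A : Matrix (Fin n) (Fin n) ℝ} (hA : A.IsSymm) (D : Fin n → ℝ)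
    (hD : ∀ i, 0 < D i)
    (h : ∀ i, ∑ j ∈ Finset.univ.erase i, |A i j| * D j ≤ A i i * D i) : A ∈ SDD n := by
  refine ⟨hA, D, hD, tri_isSymm D hA, fun i => ?_⟩
  have e1 : ∀ j, |(Matrix.diagonal D * A * Matrix.diagonal D) i j|
      = D i * (|A i j| * D j) := by
    intro j
    rw [tri_apply, abs_mul, abs_mul, abs_of_pos (hD i), abs_of_pos (hD j)]
    ring
  rw [Finset.sum_congr rfl fun j _ => e1 j, ← Finset.mul_sum, tri_apply, mul_assoc]
  exact mul_le_mul_of_nonneg_left (h i) (hD i).le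

end Stmt4Aux

open Stmt4Aux

/-- `SDD_n` is a convex cone: it contains `0`, is closed under
addition, and is closed under multiplication by nonnegative scalars. -/
theorem stmt4 (n : ℕ) (hn : 0 < n) :
    (0 : Matrix (Fin n) (Fin n) ℝ) ∈ SDD n ∧
    (∀ A B, A ∈ SDD n → B ∈ SDD n → A + B ∈ SDD n) ∧
    (∀ (c : ℝ) A, 0 ≤ c → A ∈ SDD n → c • A ∈ SDD n) := by
  refine ⟨?_, ?_, ?_⟩
  · refine mem_SDD_of_rows (by simp [Matrix.IsSymm]) (fun _ => 1) (fun _ => one_pos)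
      fun i => ?_
    simp
  · intro A B hA hB
    obtain ⟨hAs, DA, hDA, hADD⟩ := hA
    obtain ⟨hBs, DB, hDB, hBDD⟩ := hB
    have rA := row_bound hDA hADD
    have rB := row_bound hDB hBDD
    have hsymA : ∀ i j, A i j = A j i := fun i j => by
      conv_rhs => rw [← hAs]
      rfl
    have hsymB : ∀ i j, B i j = B j i := fun i j => by
      conv_rhs => rw [← hBs]
      rfl
    set C : Matrix (Fin n) (Fin n) ℝ :=
      Matrix.of fun i j => if i = j then A i i + B i i else -(|A i j| + |B i j|) with hC
    have hCapp : ∀ i j, C i j = if i = j then A i i + B i i else -(|A i j| + |B i j|) :=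
      fun i j => rfl
    have hsymC : ∀ i j, C i j = C j i := by
      intro i j
      rcases eq_or_ne i j with rfl | h
      · rfl
      · rw [hCapp, hCapp, if_neg h, if_neg (Ne.symm h), hsymA i j, hsymB i j]
    have hZC : ∀ i j, i ≠ j → C i j ≤ 0 := by
      intro i j h
      rw [hCapp, if_neg h]
      have := abs_nonneg (A i j)
      have := abs_nonneg (B i j)
      linarith
    -- PSD of the comparison quadratic form, one matrix at a time
    have hcmp : ∀ (M : Matrix (Fin n) (Fin n) ℝ) (D : Fin n → ℝ), (∀ i, 0 < D i) →
        (∀ i j, M i j = M j i) →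
        (∀ i, ∑ j ∈ Finset.univ.erase i, |M i j| * D j ≤ M i i * D i) →
        ∀ x, 0 ≤ qf (Matrix.of fun i j => if i = j then M i i else -|M i j|) x := by
      intro M D hD hsymM hrow x
      set cmp : Matrix (Fin n) (Fin n) ℝ :=
        Matrix.of fun i j => if i = j then M i i else -|M i j| with hcmpdef
      set Ms : Matrix (Fin n) (Fin n) ℝ :=
        Matrix.of fun i j => D i * cmp i j * D j with hMs
      have habs : ∀ i j, |Ms i j| = |Ms j i| := by
        intro i j
        show |D i * cmp i j * D j| = |D j * cmp j i * D i|
        have hcmpapp : ∀ a b : Fin n, cmp a b = if a = b then M a a else -|M a b| :=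
          fun a b => rfl
        have : |cmp i j| = |cmp j i| := by
          rcases eq_or_ne i j with rfl | h
          · rfl
          · rw [hcmpapp i j, hcmpapp j i, if_neg h, if_neg (Ne.symm h), abs_neg, abs_neg,
              abs_abs, abs_abs, hsymM i j]
        rw [abs_mul, abs_mul, abs_mul, abs_mul, this]
        ring
      have hdd : ∀ i, ∑ j ∈ Finset.univ.erase i, |Ms i j| ≤ Ms i i := by
        intro i
        have e1 : ∀ j ∈ Finset.univ.erase i, |Ms i j| = D i * (|M i j| * D j) := by
          intro j hj
          have h : i ≠ j := fun h => (Finset.mem_erase.mp hj).1 h.symm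
          show |D i * cmp i j * D j| = D i * (|M i j| * D j)
          have : cmp i j = -|M i j| := by
            show (if i = j then M i i else -|M i j|) = -|M i j|
            rw [if_neg h]
          rw [this, abs_mul, abs_mul, abs_neg, abs_abs, abs_of_pos (hD i), abs_of_pos (hD j)]
          ring
        rw [Finset.sum_congr rfl e1, ← Finset.mul_sum]
        have : Ms i i = D i * (M i i * D i) := by
          show D i * cmp i i * D i = D i * (M i i * D i)
          have : cmp i i = M i i := if_pos rfl
          rw [this]; ring
        rw [this]
        exact mul_le_mul_of_nonneg_left (hrow i) (hD i).le
      have h0 := qf_nonneg_of_dd Ms habs hdd (fun i => x i / D i)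
      have hfun : (fun i => D i * (x i / D i)) = x := by
        funext i
        rw [mul_comm, div_mul_cancel₀ _ (hD i).ne']
      rw [show Ms = Matrix.of fun i j => D i * cmp i j * D j from rfl] at h0
      rw [qf_scale, hfun] at h0
      exact h0
    have hpsdA := hcmp A DA hDA hsymA rA
    have hpsdB := hcmp B DB hDB hsymB rB
    have hpsdC : ∀ x, 0 ≤ qf C x := by
      intro x
      have hsumq : qf C x
          = qf (Matrix.of fun i j => if i = j then A i i else -|A i j|) x
            + qf (Matrix.of fun i j => if i = j then B i i else -|B i j|) x := by
        unfold qf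
        rw [← Finset.sum_add_distrib]
        refine Finset.sum_congr rfl fun i _ => ?_
        rw [← Finset.sum_add_distrib]
        refine Finset.sum_congr rfl fun j _ => ?_
        rcases eq_or_ne i j with rfl | h
        · rw [hCapp i i, if_pos rfl, Matrix.of_apply, Matrix.of_apply, if_pos rfl, if_pos rfl]
          ring
        · rw [hCapp i j, if_neg h, Matrix.of_apply, Matrix.of_apply, if_neg h, if_neg h]
          ring
      rw [hsumq]
      exact add_nonneg (hpsdA x) (hpsdB x)
    obtain ⟨g, hg1, _, hg3⟩ := exists_pos_vec C hsymC hZC hpsdC Finset.univ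
    refine mem_SDD_of_rows ?_ g (fun i => hg1 i (Finset.mem_univ i)) ?_
    · unfold Matrix.IsSymm at *
      rw [Matrix.transpose_add, hAs, hBs]
    · intro i
      have h := hg3 i (Finset.mem_univ i)
      rw [← Finset.add_sum_erase Finset.univ (fun j => C i j * g j) (Finset.mem_univ i)] at h
      have hCii : C i i = A i i + B i i := if_pos rfl
      have hCoff : ∀ j ∈ Finset.univ.erase i, C i j * g j = -((|A i j| + |B i j|) * g j) := by
        intro j hj
        have hne : i ≠ j := fun h' => (Finset.mem_erase.mp hj).1 h'.symm
        rw [hCapp, if_neg hne]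
        ring
      rw [Finset.sum_congr rfl hCoff, Finset.sum_neg_distrib, hCii] at h
      have hterm : ∀ j ∈ Finset.univ.erase i, |(A + B) i j| * g j
          ≤ (|A i j| + |B i j|) * g j := by
        intro j hj
        have : |(A + B) i j| ≤ |A i j| + |B i j| := by
          rw [Matrix.add_apply]
          exact abs_add_le _ _
        exact mul_le_mul_of_nonneg_right this (hg1 j (Finset.mem_univ j)).le
      calc ∑ j ∈ Finset.univ.erase i, |(A + B) i j| * g j
          ≤ ∑ j ∈ Finset.univ.erase i, (|A i j| + |B i j|) * g j :=
            Finset.sum_le_sum hterm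
        _ ≤ (A i i + B i i) * g i := by linarith [h]
        _ = (A + B) i i * g i := by rw [Matrix.add_apply]
  · intro c A hc hA
    obtain ⟨hAs, D, hD, hDD⟩ := hA
    have rA := row_bound hD hDD
    refine mem_SDD_of_rows ?_ D hD fun i => ?_
    · unfold Matrix.IsSymm at *
      rw [Matrix.transpose_smul, hAs]
    · have e1 : ∀ j, |(c • A) i j| * D j = c * (|A i j| * D j) := by
        intro j
        rw [Matrix.smul_apply, smul_eq_mul, abs_mul, abs_of_nonneg hc]
        ring
      rw [Finset.sum_congr rfl fun j _ => e1 j, ← Finset.mul_sum]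
      have : (c • A) i i * D i = c * (A i i * D i) := by
        rw [Matrix.smul_apply, smul_eq_mul]; ring
      rw [this]
      exact mul_le_mul_of_nonneg_left (rA i) hc
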